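/- Let d ≥ 3 be an integer, C₀ > 0 and ε > 0. Let F : ℝ^d × (0,∞) → ℝ be measurable with |F(z,τ)| ≤ C₀·min(‖z‖^{−d−1}, τ^{−(d+1)/2}) for all z ≠ 0 and τ > 0, and let u : ℝ^d × [0,∞) → ℝ^d be measurable with |u(y,s)| ≤ ε·min((1+‖y‖)^{−d}, (1+s)^{−d/2}) for a.e. y and all s ≥ 0. Then there exists a constant C > 0 (depending only on d and C₀) such that for all t > 0 and all x ∈ ℝ^d with ‖x‖ ≥ 1, |∫₀^t ∫_{ℝ^d} F(x−y, t−s)·|u(y,s)|² dy ds| ≤ C·ε²·√t·‖x‖^{−d−1}. -/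

import Mathlib

open MeasureTheory

private lemma two_rpow_cancel (N : ℝ) (c : ℝ) (hc : 0 < c) :
    c ^ (-N) = 2 ^ N * (2 * c) ^ (-N) := by
  rw [Real.mul_rpow (by norm_num) hc.le, ← mul_assoc,
    ← Real.rpow_add (by norm_num : (0:ℝ) < 2)]
  simp

private lemma min_rpow_le {a b N : ℝ} (ha : 0 ≤ a) (hb : 0 < b) (hN : 0 ≤ N) :
    min (a ^ (-N)) (b ^ (-N)) ≤ 2 ^ N * (a + b) ^ (-N) := by
  have h2 : (0:ℝ) ≤ 2 ^ N := Real.rpow_nonneg (by norm_num) N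
  rcases le_total a b with h | h
  · calc min (a ^ (-N)) (b ^ (-N)) ≤ b ^ (-N) := min_le_right _ _
      _ = 2 ^ N * (2 * b) ^ (-N) := two_rpow_cancel N b hb
      _ ≤ 2 ^ N * (a + b) ^ (-N) := by
          have h3 := Real.rpow_le_rpow_of_nonpos (by linarith : (0:ℝ) < a + b)
            (by linarith : a + b ≤ 2 * b) (by linarith : -N ≤ 0)
          exact mul_le_mul_of_nonneg_left h3 h2
  · have ha' : 0 < a := lt_of_lt_of_le hb h
    calc min (a ^ (-N)) (b ^ (-N)) ≤ a ^ (-N) := min_le_left _ _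
      _ = 2 ^ N * (2 * a) ^ (-N) := two_rpow_cancel N a ha'
      _ ≤ 2 ^ N * (a + b) ^ (-N) := by
          have h3 := Real.rpow_le_rpow_of_nonpos (by linarith : (0:ℝ) < a + b)
            (by linarith : a + b ≤ 2 * a) (by linarith : -N ≤ 0)
          exact mul_le_mul_of_nonneg_left h3 h2

private lemma half_rpow {X N : ℝ} (hX : 0 < X) : (X / 2) ^ (-N) = 2 ^ N * X ^ (-N) := by
  have h := two_rpow_cancel N (X / 2) (by linarith)
  rw [show 2 * (X / 2) = X by ring] at h
  exact h

private lemma master_ineq {d : ℕ} {x y : EuclideanSpace ℝ (Fin d)} {c N : ℝ}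
    (hc : 0 < c) (hN : 0 ≤ N) (hx : 0 < ‖x‖) :
    min (‖x - y‖ ^ (-N)) (c ^ (-N)) * (1 + ‖y‖) ^ (-N) ≤
      2 ^ N * ‖x‖ ^ (-N) * ((1 + ‖y‖) ^ (-N) + 2 ^ N * (‖x - y‖ + c) ^ (-N)) := by
  have hxy : ‖x‖ ≤ ‖x - y‖ + ‖y‖ := by
    calc ‖x‖ = ‖(x - y) + y‖ := by rw [sub_add_cancel]
      _ ≤ ‖x - y‖ + ‖y‖ := norm_add_le _ _
  have h2N : (0:ℝ) ≤ 2 ^ N := Real.rpow_nonneg (by norm_num) N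
  have hy1 : (0:ℝ) ≤ (1 + ‖y‖) ^ (-N) := Real.rpow_nonneg (by positivity) _
  have hG : (0:ℝ) ≤ (‖x - y‖ + c) ^ (-N) := Real.rpow_nonneg (by positivity) _
  have hX : (0:ℝ) ≤ 2 ^ N * ‖x‖ ^ (-N) :=
    mul_nonneg h2N (Real.rpow_nonneg hx.le _)
  rcases le_total (‖x‖ / 2) ‖x - y‖ with h | h
  · have h1 : min (‖x - y‖ ^ (-N)) (c ^ (-N)) ≤ 2 ^ N * ‖x‖ ^ (-N) := by
      calc min (‖x - y‖ ^ (-N)) (c ^ (-N)) ≤ ‖x - y‖ ^ (-N) := min_le_left _ _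
        _ ≤ (‖x‖ / 2) ^ (-N) :=
            Real.rpow_le_rpow_of_nonpos (by positivity) h (by linarith)
        _ = 2 ^ N * ‖x‖ ^ (-N) := half_rpow hx
    calc min (‖x - y‖ ^ (-N)) (c ^ (-N)) * (1 + ‖y‖) ^ (-N)
        ≤ (2 ^ N * ‖x‖ ^ (-N)) * (1 + ‖y‖) ^ (-N) :=
          mul_le_mul_of_nonneg_right h1 hy1
      _ ≤ 2 ^ N * ‖x‖ ^ (-N) * ((1 + ‖y‖) ^ (-N) + 2 ^ N * (‖x - y‖ + c) ^ (-N)) := by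
          apply mul_le_mul_of_nonneg_left _ hX
          nlinarith
  · have hy : ‖x‖ / 2 ≤ 1 + ‖y‖ := by linarith
    have h1 : (1 + ‖y‖) ^ (-N) ≤ 2 ^ N * ‖x‖ ^ (-N) := by
      calc (1 + ‖y‖) ^ (-N) ≤ (‖x‖ / 2) ^ (-N) :=
            Real.rpow_le_rpow_of_nonpos (by positivity) hy (by linarith)
        _ = 2 ^ N * ‖x‖ ^ (-N) := half_rpow hx
    have h2 : min (‖x - y‖ ^ (-N)) (c ^ (-N)) ≤ 2 ^ N * (‖x - y‖ + c) ^ (-N) :=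
      min_rpow_le (norm_nonneg _) hc hN
    have hmin0 : 0 ≤ min (‖x - y‖ ^ (-N)) (c ^ (-N)) :=
      le_min (Real.rpow_nonneg (norm_nonneg _) _) (Real.rpow_nonneg hc.le _)
    calc min (‖x - y‖ ^ (-N)) (c ^ (-N)) * (1 + ‖y‖) ^ (-N)
        ≤ (2 ^ N * (‖x - y‖ + c) ^ (-N)) * (2 ^ N * ‖x‖ ^ (-N)) :=
          mul_le_mul h2 h1 hy1 (by positivity)
      _ ≤ 2 ^ N * ‖x‖ ^ (-N) * ((1 + ‖y‖) ^ (-N) + 2 ^ N * (‖x - y‖ + c) ^ (-N)) := by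
          nlinarith

private lemma usq_bound {d : ℕ} (hd : 3 ≤ d) {ε a b v : ℝ} (hε : 0 ≤ ε) (ha : 1 ≤ a)
    (hb : 1 ≤ b) (hv : 0 ≤ v)
    (h : v ≤ ε * min (a ^ (-(d : ℝ))) (b ^ (-(d : ℝ) / 2))) :
    v ^ 2 ≤ ε ^ 2 * (a ^ (-((d : ℝ) + 1)) * b⁻¹) := by
  have ha0 : (0:ℝ) < a := by linarith
  have hb0 : (0:ℝ) < b := by linarith
  have hd3 : (3:ℝ) ≤ (d:ℝ) := by exact_mod_cast hd
  have hd0 : (0:ℝ) < (d:ℝ) := by linarith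
  set m := min (a ^ (-(d : ℝ))) (b ^ (-(d : ℝ) / 2)) with hm
  have hm0 : 0 < m :=
    lt_min (Real.rpow_pos_of_pos ha0 _) (Real.rpow_pos_of_pos hb0 _)
  have h2 : v ^ 2 ≤ (ε * m) ^ 2 := pow_le_pow_left₀ hv h 2
  have hpq : ((d:ℝ) + 1) / d + ((d:ℝ) - 1) / d = 2 := by
    field_simp
    ring
  have hp0 : 0 ≤ ((d:ℝ) + 1) / d := by positivity
  have hq0 : 0 ≤ ((d:ℝ) - 1) / d := div_nonneg (by linarith) hd0.le
  have e1 : m ^ (2:ℕ) = m ^ (((d:ℝ) + 1) / d) * m ^ (((d:ℝ) - 1) / d) := by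
    rw [← Real.rpow_natCast m 2, show ((2:ℕ):ℝ) = 2 from by norm_num, ← hpq,
      Real.rpow_add hm0]
  have b1 : m ^ (((d:ℝ) + 1) / d) ≤ a ^ (-((d : ℝ) + 1)) := by
    calc m ^ (((d:ℝ) + 1) / d) ≤ (a ^ (-(d:ℝ))) ^ (((d:ℝ) + 1) / d) :=
          Real.rpow_le_rpow hm0.le (min_le_left _ _) hp0
      _ = a ^ (-(d:ℝ) * (((d:ℝ) + 1) / d)) := (Real.rpow_mul ha0.le _ _).symm
      _ = a ^ (-((d : ℝ) + 1)) := by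
          congr 1
          field_simp
  have b2 : m ^ (((d:ℝ) - 1) / d) ≤ b⁻¹ := by
    calc m ^ (((d:ℝ) - 1) / d) ≤ (b ^ (-(d:ℝ)/2)) ^ (((d:ℝ) - 1) / d) :=
          Real.rpow_le_rpow hm0.le (min_le_right _ _) hq0
      _ = b ^ (-(d:ℝ)/2 * (((d:ℝ) - 1) / d)) := (Real.rpow_mul hb0.le _ _).symm
      _ ≤ b ^ (-1:ℝ) := by
          apply Real.rpow_le_rpow_of_exponent_le hb
          rw [show -(d:ℝ)/2 * (((d:ℝ) - 1) / d) = -(((d:ℝ) - 1)) / 2 from by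
            field_simp]
          linarith
      _ = b⁻¹ := Real.rpow_neg_one b
  calc v ^ 2 ≤ (ε * m) ^ 2 := h2
    _ = ε ^ 2 * m ^ (2:ℕ) := by ring
    _ = ε ^ 2 * (m ^ (((d:ℝ) + 1) / d) * m ^ (((d:ℝ) - 1) / d)) := by rw [e1]
    _ ≤ ε ^ 2 * (a ^ (-((d : ℝ) + 1)) * b⁻¹) := by
        apply mul_le_mul_of_nonneg_left _ (by positivity)
        exact mul_le_mul b1 b2 (Real.rpow_nonneg hm0.le _)
          (Real.rpow_nonneg ha0.le _)

private lemma key_eq {d : ℕ} {c N : ℝ} (hc : 0 < c) (z : EuclideanSpace ℝ (Fin d)) :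
    (‖z‖ + c) ^ (-N) = c ^ (-N) * (1 + ‖c⁻¹ • z‖) ^ (-N) := by
  rw [norm_smul, Real.norm_eq_abs, abs_of_pos (inv_pos.mpr hc),
    show 1 + c⁻¹ * ‖z‖ = c⁻¹ * (c + ‖z‖) from by
      field_simp,
    Real.mul_rpow (inv_pos.mpr hc).le (by positivity), ← mul_assoc,
    ← Real.mul_rpow hc.le (inv_pos.mpr hc).le, mul_inv_cancel₀ hc.ne',
    Real.one_rpow, one_mul, add_comm ‖z‖ c]

private lemma integ_one_add (d : ℕ) {N : ℝ} (hN : (d:ℝ) < N) :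
    Integrable (fun w : EuclideanSpace ℝ (Fin d) => (1 + ‖w‖) ^ (-N)) := by
  apply integrable_one_add_norm
  rwa [finrank_euclideanSpace_fin]

private lemma integ_shift (d : ℕ) {c N : ℝ} (hc : 0 < c) (hN : (d:ℝ) < N) :
    Integrable (fun z : EuclideanSpace ℝ (Fin d) => (‖z‖ + c) ^ (-N)) := by
  have h := ((integ_one_add d hN).comp_smul (μ := volume)
    (inv_ne_zero hc.ne')).const_mul (c ^ (-N))
  exact h.congr (Filter.Eventually.of_forall fun z => (key_eq hc z).symm)

private lemma scale_integral (d : ℕ) {c N : ℝ} (hc : 0 < c) (hN : N = (d:ℝ) + 1) :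
    ∫ z : EuclideanSpace ℝ (Fin d), (‖z‖ + c) ^ (-N) =
      c⁻¹ * ∫ w : EuclideanSpace ℝ (Fin d), (1 + ‖w‖) ^ (-N) := by
  calc ∫ z : EuclideanSpace ℝ (Fin d), (‖z‖ + c) ^ (-N)
      = ∫ z : EuclideanSpace ℝ (Fin d),
          c ^ (-N) * (fun w : EuclideanSpace ℝ (Fin d) => (1 + ‖w‖) ^ (-N)) (c⁻¹ • z) := by
        apply integral_congr_ae
        exact Filter.Eventually.of_forall fun z => key_eq hc z
    _ = c ^ (-N) * ∫ z : EuclideanSpace ℝ (Fin d),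
          (fun w : EuclideanSpace ℝ (Fin d) => (1 + ‖w‖) ^ (-N)) (c⁻¹ • z) :=
        integral_const_mul _ _
    _ = c ^ (-N) * (|c ^ (Module.finrank ℝ (EuclideanSpace ℝ (Fin d)))| •
          ∫ w : EuclideanSpace ℝ (Fin d), (1 + ‖w‖) ^ (-N)) := by
        congr 1
        exact Measure.integral_comp_inv_smul volume
          (fun w : EuclideanSpace ℝ (Fin d) => (1 + ‖w‖) ^ (-N)) c
    _ = c⁻¹ * ∫ w : EuclideanSpace ℝ (Fin d), (1 + ‖w‖) ^ (-N) := by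
        rw [finrank_euclideanSpace_fin, smul_eq_mul, abs_of_pos (pow_pos hc d), ← mul_assoc]
        congr 1
        rw [← Real.rpow_natCast c d, ← Real.rpow_add hc, hN,
          show -((d:ℝ) + 1) + (d:ℝ) = -1 from by ring, Real.rpow_neg_one]

private lemma log_le_two_sqrt {t : ℝ} (ht : 0 ≤ t) :
    Real.log (1 + t) ≤ 2 * Real.sqrt t := by
  have h1 : Real.log (1 + t) = 2 * Real.log (Real.sqrt (1 + t)) := by
    rw [Real.log_sqrt (by linarith)]; ring
  have h2 : Real.log (Real.sqrt (1 + t)) ≤ Real.sqrt (1 + t) - 1 :=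
    Real.log_le_sub_one_of_pos (Real.sqrt_pos.mpr (by linarith))
  have h3 : Real.sqrt (1 + t) ≤ 1 + Real.sqrt t := by
    have h4 := Real.sq_sqrt ht
    have h5 := Real.sqrt_nonneg t
    calc Real.sqrt (1 + t) ≤ Real.sqrt ((1 + Real.sqrt t) ^ 2) :=
          Real.sqrt_le_sqrt (by nlinarith)
      _ = 1 + Real.sqrt t := Real.sqrt_sq (by positivity)
  linarith

set_option maxHeartbeats 1000000 in
/-- For `d ≥ 3`, if `|F(z,τ)| ≤ C₀ min(‖z‖^{−d−1}, τ^{−(d+1)/2})` and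
`|u(y,s)| ≤ ε min((1+‖y‖)^{−d}, (1+s)^{−d/2})` a.e., then there is `C > 0`
depending only on `d` and `C₀` such that for all `t > 0` and `‖x‖ ≥ 1`,
`|∫₀^t ∫ F(x−y,t−s) |u(y,s)|² dy ds| ≤ C ε² √t ‖x‖^{−d−1}`. -/
theorem stmt13 (d : ℕ) (hd : 3 ≤ d) (C₀ : ℝ) (hC₀ : 0 < C₀) :
    ∃ C > (0 : ℝ), ∀ ε : ℝ, 0 < ε →
      ∀ F : EuclideanSpace ℝ (Fin d) → ℝ → ℝ, Measurable (Function.uncurry F) →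
      (∀ z : EuclideanSpace ℝ (Fin d), z ≠ 0 → ∀ τ : ℝ, 0 < τ →
        |F z τ| ≤ C₀ * min (‖z‖ ^ (-(d : ℝ) - 1)) (τ ^ (-((d : ℝ) + 1) / 2))) →
      ∀ u : EuclideanSpace ℝ (Fin d) → ℝ → EuclideanSpace ℝ (Fin d),
      Measurable (Function.uncurry u) →
      (∀ s : ℝ, 0 ≤ s → ∀ᵐ y : EuclideanSpace ℝ (Fin d) ∂volume,
        ‖u y s‖ ≤ ε * min ((1 + ‖y‖) ^ (-(d : ℝ))) ((1 + s) ^ (-(d : ℝ) / 2))) →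
      ∀ t : ℝ, 0 < t → ∀ x : EuclideanSpace ℝ (Fin d), 1 ≤ ‖x‖ →
        |∫ s in Set.Ioc (0 : ℝ) t, ∫ y, F (x - y) (t - s) * ‖u y s‖ ^ 2| ≤
          C * ε ^ 2 * Real.sqrt t * ‖x‖ ^ (-(d : ℝ) - 1) := by
  have hd3 : (3:ℝ) ≤ (d:ℝ) := by exact_mod_cast hd
  set N : ℝ := (d:ℝ) + 1 with hNdef
  have hdN : (d:ℝ) < N := by rw [hNdef]; linarith
  have hN0 : (0:ℝ) ≤ N := by rw [hNdef]; linarith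
  have hAint : Integrable (fun w : EuclideanSpace ℝ (Fin d) => (1 + ‖w‖) ^ (-N)) :=
    integ_one_add d hdN
  set A : ℝ := ∫ w : EuclideanSpace ℝ (Fin d), (1 + ‖w‖) ^ (-N) with hAdef
  have hA0 : 0 ≤ A :=
    integral_nonneg fun w => Real.rpow_nonneg (by positivity) _
  have h2N : (0:ℝ) < 2 ^ N := Real.rpow_pos_of_pos two_pos N
  have h2N1 : (2:ℝ) ^ (N + 1) = 2 ^ N * 2 := Real.rpow_add_one (by norm_num) N
  refine ⟨C₀ * 2 ^ N * (2 + 2 ^ (N + 1)) * (A + 1), by positivity, ?_⟩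
  intro ε hε F _hFmeas hF u _humeas hu t ht x hx
  have hx0 : (0:ℝ) < ‖x‖ := lt_of_lt_of_le one_pos hx
  set K : ℝ := C₀ * ε ^ 2 * (2 ^ N * ‖x‖ ^ (-N)) with hKdef
  have hxN : (0:ℝ) < ‖x‖ ^ (-N) := Real.rpow_pos_of_pos hx0 _
  have hK0 : 0 ≤ K := by rw [hKdef]; positivity
  -- inner estimate for each s in the open interval
  have inner : ∀ s ∈ Set.Ioo (0:ℝ) t,
      |∫ y, F (x - y) (t - s) * ‖u y s‖ ^ 2| ≤
        K * A * (1 + s)⁻¹ + K * A * 2 ^ N * (t - s) ^ (-(1/2) : ℝ) := by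
    intro s hs
    obtain ⟨hs0, hst⟩ := hs
    have hτ : 0 < t - s := by linarith
    set c : ℝ := Real.sqrt (t - s) with hcdef
    have hc : 0 < c := Real.sqrt_pos.mpr hτ
    have hGint : Integrable
        (fun y : EuclideanSpace ℝ (Fin d) => (‖x - y‖ + c) ^ (-N)) :=
      (integ_shift d hc hdN).comp_sub_left x
    have hΦint : Integrable (fun y : EuclideanSpace ℝ (Fin d) =>
        (C₀ * (ε ^ 2 * (1 + s)⁻¹)) * (2 ^ N * ‖x‖ ^ (-N) *
          ((1 + ‖y‖) ^ (-N) + 2 ^ N * (‖x - y‖ + c) ^ (-N)))) :=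
      (((hAint.add (hGint.const_mul (2 ^ N))).const_mul
        (2 ^ N * ‖x‖ ^ (-N))).const_mul _)
    have hs1 : (0:ℝ) < 1 + s := by linarith
    have hae : ∀ᵐ y : EuclideanSpace ℝ (Fin d) ∂volume,
        ‖F (x - y) (t - s) * ‖u y s‖ ^ 2‖ ≤
        (C₀ * (ε ^ 2 * (1 + s)⁻¹)) * (2 ^ N * ‖x‖ ^ (-N) *
          ((1 + ‖y‖) ^ (-N) + 2 ^ N * (‖x - y‖ + c) ^ (-N))) := by
      have hxne : ∀ᵐ y : EuclideanSpace ℝ (Fin d) ∂volume, y ≠ x := by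
        haveI : Nontrivial (EuclideanSpace ℝ (Fin d)) := by
          haveI : Nonempty (Fin d) := ⟨⟨0, by omega⟩⟩
          infer_instance
        rw [ae_iff]
        have : {y : EuclideanSpace ℝ (Fin d) | ¬ y ≠ x} = {x} := by
          ext y; simp
        rw [this]
        exact measure_singleton x
      filter_upwards [hu s hs0.le, hxne] with y hy hyx
      have hz : x - y ≠ 0 := sub_ne_zero.mpr (Ne.symm hyx)
      have hF' := hF (x - y) hz (t - s) hτ
      have hmin_eq : (t - s) ^ (-((d:ℝ) + 1) / 2) = c ^ (-N) := by
        rw [hcdef, Real.sqrt_eq_rpow, ← Real.rpow_mul hτ.le]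
        congr 1
        rw [hNdef]; ring
      have hF'' : |F (x - y) (t - s)| ≤
          C₀ * min (‖x - y‖ ^ (-N)) (c ^ (-N)) := by
        rw [show -(d:ℝ) - 1 = -N from by rw [hNdef]; ring] at hF'
        rwa [hmin_eq] at hF'
      have husq : ‖u y s‖ ^ 2 ≤ ε ^ 2 * ((1 + ‖y‖) ^ (-N) * (1 + s)⁻¹) := by
        have h := usq_bound hd hε.le (by linarith [norm_nonneg y] : 1 ≤ 1 + ‖y‖)
          (by linarith : 1 ≤ 1 + s) (norm_nonneg (u y s)) hy
        rwa [show -((d:ℝ) + 1) = -N from by rw [hNdef]] at h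
      have hmin0 : 0 ≤ min (‖x - y‖ ^ (-N)) (c ^ (-N)) :=
        le_min (Real.rpow_nonneg (norm_nonneg _) _) (Real.rpow_nonneg hc.le _)
      calc ‖F (x - y) (t - s) * ‖u y s‖ ^ 2‖
          = |F (x - y) (t - s)| * ‖u y s‖ ^ 2 := by
            rw [Real.norm_eq_abs, abs_mul,
              abs_of_nonneg (by positivity : (0:ℝ) ≤ ‖u y s‖ ^ 2)]
        _ ≤ (C₀ * min (‖x - y‖ ^ (-N)) (c ^ (-N))) *
              (ε ^ 2 * ((1 + ‖y‖) ^ (-N) * (1 + s)⁻¹)) :=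
            mul_le_mul hF'' husq (by positivity) (by positivity)
        _ = (C₀ * (ε ^ 2 * (1 + s)⁻¹)) *
              (min (‖x - y‖ ^ (-N)) (c ^ (-N)) * (1 + ‖y‖) ^ (-N)) := by ring
        _ ≤ (C₀ * (ε ^ 2 * (1 + s)⁻¹)) * (2 ^ N * ‖x‖ ^ (-N) *
              ((1 + ‖y‖) ^ (-N) + 2 ^ N * (‖x - y‖ + c) ^ (-N))) := by
            apply mul_le_mul_of_nonneg_left (master_ineq hc hN0 hx0)
            positivity
    have hbound := norm_integral_le_of_norm_le hΦint hae
    rw [Real.norm_eq_abs] at hbound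
    have hval : (∫ y : EuclideanSpace ℝ (Fin d),
        (C₀ * (ε ^ 2 * (1 + s)⁻¹)) * (2 ^ N * ‖x‖ ^ (-N) *
          ((1 + ‖y‖) ^ (-N) + 2 ^ N * (‖x - y‖ + c) ^ (-N)))) =
        (C₀ * (ε ^ 2 * (1 + s)⁻¹)) * (2 ^ N * ‖x‖ ^ (-N) *
          (A + 2 ^ N * (c⁻¹ * A))) := by
      rw [integral_const_mul, integral_const_mul,
        integral_add hAint (hGint.const_mul (2 ^ N)), integral_const_mul]
      congr 3
      rw [show (∫ y : EuclideanSpace ℝ (Fin d), (‖x - y‖ + c) ^ (-N)) =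
          ∫ z : EuclideanSpace ℝ (Fin d), (‖z‖ + c) ^ (-N) from
        integral_sub_left_eq_self
          (fun z : EuclideanSpace ℝ (Fin d) => (‖z‖ + c) ^ (-N)) volume x]
      rw [scale_integral d hc hNdef]
    rw [hval] at hbound
    have hcinv : c⁻¹ = (t - s) ^ (-(1/2) : ℝ) := by
      rw [hcdef, Real.sqrt_eq_rpow, ← Real.rpow_neg hτ.le]
    have hsinv0 : (0:ℝ) ≤ (1 + s)⁻¹ := by positivity
    have hsinv1 : (1 + s)⁻¹ ≤ 1 := by
      rw [inv_le_one_iff₀]; right; linarith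
    have hτr : (0:ℝ) ≤ (t - s) ^ (-(1/2) : ℝ) := Real.rpow_nonneg hτ.le _
    calc |∫ y, F (x - y) (t - s) * ‖u y s‖ ^ 2|
        ≤ (C₀ * (ε ^ 2 * (1 + s)⁻¹)) * (2 ^ N * ‖x‖ ^ (-N) *
            (A + 2 ^ N * (c⁻¹ * A))) := hbound
      _ = K * A * (1 + s)⁻¹ +
            (K * A * 2 ^ N * (t - s) ^ (-(1/2) : ℝ)) * (1 + s)⁻¹ := by
          rw [hcinv, hKdef]; try ring
      _ ≤ K * A * (1 + s)⁻¹ + K * A * 2 ^ N * (t - s) ^ (-(1/2) : ℝ) := by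
          have hKA : (0:ℝ) ≤ K * A * 2 ^ N * (t - s) ^ (-(1/2) : ℝ) :=
            mul_nonneg (mul_nonneg (mul_nonneg hK0 hA0) h2N.le) hτr
          nlinarith
  -- integrability of the outer bound
  have hint1 : IntegrableOn (fun s : ℝ => (1 + s)⁻¹) (Set.Ioc 0 t) := by
    apply (ContinuousOn.integrableOn_compact isCompact_Icc ?_).mono_set
      Set.Ioc_subset_Icc_self
    apply ContinuousOn.inv₀ (continuous_const.add continuous_id).continuousOn
    intro s hs
    have := hs.1
    exact ne_of_gt (show (0:ℝ) < 1 + s by linarith)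
  have hint2 : IntegrableOn (fun s : ℝ => (t - s) ^ (-(1/2) : ℝ)) (Set.Ioc 0 t) := by
    have h := (intervalIntegral.intervalIntegrable_rpow'
      (a := 0) (b := t) (r := -(1/2)) (by norm_num)).comp_sub_left t
    simp only [sub_self, sub_zero] at h
    exact (intervalIntegrable_iff_integrableOn_Ioc_of_le ht.le).mp h.symm
  have hψint : Integrable (fun s : ℝ =>
      K * A * (1 + s)⁻¹ + K * A * 2 ^ N * (t - s) ^ (-(1/2) : ℝ))
      (volume.restrict (Set.Ioc 0 t)) :=
    (hint1.const_mul (K * A)).add (hint2.const_mul (K * A * 2 ^ N))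
  have haes : ∀ᵐ s ∂volume.restrict (Set.Ioc (0:ℝ) t),
      ‖∫ y, F (x - y) (t - s) * ‖u y s‖ ^ 2‖ ≤
        K * A * (1 + s)⁻¹ + K * A * 2 ^ N * (t - s) ^ (-(1/2) : ℝ) := by
    have h1 : ∀ᵐ s ∂volume.restrict (Set.Ioc (0:ℝ) t), s ∈ Set.Ioc (0:ℝ) t :=
      ae_restrict_mem measurableSet_Ioc
    have h2 : ∀ᵐ s ∂volume.restrict (Set.Ioc (0:ℝ) t), s ≠ t := by
      rw [ae_iff]
      have he : {s : ℝ | ¬ s ≠ t} = {t} := by ext s; simp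
      rw [he, Measure.restrict_apply (measurableSet_singleton t)]
      exact measure_mono_null Set.inter_subset_left (measure_singleton t)
    filter_upwards [h1, h2] with s hs hst
    rw [Real.norm_eq_abs]
    exact inner s ⟨hs.1, lt_of_le_of_ne hs.2 hst⟩
  have hbound := norm_integral_le_of_norm_le hψint haes
  rw [Real.norm_eq_abs] at hbound
  -- compute the outer integrals
  have hI1 : (∫ s in Set.Ioc (0:ℝ) t, (1 + s)⁻¹) = Real.log (1 + t) := by
    rw [← intervalIntegral.integral_of_le ht.le]
    have h1 : (∫ s in (0:ℝ)..t, (1 + s)⁻¹) = ∫ s in ((1:ℝ) + 0)..(1 + t), s⁻¹ :=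
      intervalIntegral.integral_comp_add_left (fun s : ℝ => s⁻¹) 1
    rw [h1]
    simp only [add_zero]
    rw [show (∫ s in (1:ℝ)..(1 + t), s⁻¹) = ∫ s in (1:ℝ)..(1 + t), 1 / s from by
      simp only [one_div]]
    rw [integral_one_div (by
      intro hmem
      rw [Set.mem_uIcc] at hmem
      rcases hmem with ⟨h', _⟩ | ⟨_, h'⟩ <;> linarith)]
    norm_num
  have hI2 : (∫ s in Set.Ioc (0:ℝ) t, (t - s) ^ (-(1/2) : ℝ)) = 2 * Real.sqrt t := by
    rw [← intervalIntegral.integral_of_le ht.le]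
    have h1 : (∫ s in (0:ℝ)..t, (t - s) ^ (-(1/2) : ℝ)) =
        ∫ s in (t - t)..(t - 0), s ^ (-(1/2) : ℝ) :=
      intervalIntegral.integral_comp_sub_left (fun s : ℝ => s ^ (-(1/2) : ℝ)) t
    rw [h1]
    simp only [sub_self, sub_zero]
    rw [integral_rpow (Or.inl (by norm_num))]
    rw [show -(1/2 : ℝ) + 1 = 1/2 from by norm_num,
      Real.zero_rpow (by norm_num : (1/2 : ℝ) ≠ 0), ← Real.sqrt_eq_rpow]
    ring
  have hψval : (∫ s in Set.Ioc (0:ℝ) t,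
      (K * A * (1 + s)⁻¹ + K * A * 2 ^ N * (t - s) ^ (-(1/2) : ℝ))) =
      K * A * Real.log (1 + t) + K * A * 2 ^ N * (2 * Real.sqrt t) := by
    rw [integral_add (hint1.const_mul (K * A)) (hint2.const_mul (K * A * 2 ^ N)),
      integral_const_mul, integral_const_mul, hI1, hI2]
  have hlog := log_le_two_sqrt ht.le
  have hsq : (0:ℝ) < Real.sqrt t := Real.sqrt_pos.mpr ht
  have hKA : (0:ℝ) ≤ K * A := mul_nonneg hK0 hA0
  calc |∫ s in Set.Ioc (0:ℝ) t, ∫ y, F (x - y) (t - s) * ‖u y s‖ ^ 2|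
      ≤ ∫ s in Set.Ioc (0:ℝ) t,
          (K * A * (1 + s)⁻¹ + K * A * 2 ^ N * (t - s) ^ (-(1/2) : ℝ)) := hbound
    _ = K * A * Real.log (1 + t) + K * A * 2 ^ N * (2 * Real.sqrt t) := hψval
    _ ≤ K * A * (2 * Real.sqrt t) + K * A * 2 ^ N * (2 * Real.sqrt t) := by
        have := mul_le_mul_of_nonneg_left hlog hKA
        linarith
    _ = C₀ * 2 ^ N * (2 + 2 ^ (N + 1)) * A * ε ^ 2 * Real.sqrt t * ‖x‖ ^ (-N) := by
        rw [h2N1, hKdef]; ring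
    _ ≤ C₀ * 2 ^ N * (2 + 2 ^ (N + 1)) * (A + 1) * ε ^ 2 * Real.sqrt t * ‖x‖ ^ (-N) := by
        have hstep : C₀ * 2 ^ N * (2 + 2 ^ (N + 1)) * A ≤
            C₀ * 2 ^ N * (2 + 2 ^ (N + 1)) * (A + 1) := by
          apply mul_le_mul_of_nonneg_left (by linarith) (by positivity)
        apply mul_le_mul_of_nonneg_right _ hxN.le
        apply mul_le_mul_of_nonneg_right _ hsq.le
        apply mul_le_mul_of_nonneg_right hstep (by positivity)
    _ = C₀ * 2 ^ N * (2 + 2 ^ (N + 1)) * (A + 1) * ε ^ 2 * Real.sqrt t *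
          ‖x‖ ^ (-(d:ℝ) - 1) := by
        rw [show -(d:ℝ) - 1 = -N from by rw [hNdef]; ring]
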